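/- Let G be a graph with an edge-coloring χ : E(G) → [r] and let v, u₁, u₂, w₁, w₂ be five distinct vertices such that all six edges vu₁, vu₂, vw₁, vw₂, u₁u₂, w₁w₂ belong to G, so that B = v u₁ u₂ w₁ w₂ is a bowtie subgraph with center v. If B is not bad (i.e., f(B,k) = 0 for every color k ∈ [r]), then the triangles vu₁u₂ and vw₁w₂ have a common type: there exist parameters such that both triangles are of type a(j,k,ℓ), or both are of type b(k,ℓ), or both are of type c(k). -/
import Mathlib


open SimpleGraph

/-- The color-counting function
`f(B,k) = 1_k(v₁v₂)+1_k(v₁v₃)+1_k(v₄v₅)−1_k(v₁v₄)−1_k(v₁v₅)−1_k(v₂v₃)` of a bowtie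
`v₁v₂v₃v₄v₅`; the bowtie is bad if `f(B,k) ≠ 0` for some color `k`. -/
def bowtieF {V : Type*} {r : ℕ} (χ : Sym2 V → Fin r) (v₁ v₂ v₃ v₄ v₅ : V) (k : Fin r) : ℤ :=
  (if χ s(v₁, v₂) = k then 1 else 0) + (if χ s(v₁, v₃) = k then 1 else 0)
    + (if χ s(v₄, v₅) = k then 1 else 0) - (if χ s(v₁, v₄) = k then 1 else 0)
    - (if χ s(v₁, v₅) = k then 1 else 0) - (if χ s(v₂, v₃) = k then 1 else 0)

/-- The triangle `vuw` is of type `a(j,k,ℓ)`: `j,k,ℓ` pairwise distinct,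
`{χ(vu), χ(vw)} = {j,k}` and `χ(uw) = ℓ`. -/
def TriTypeA {V : Type*} {r : ℕ} (χ : Sym2 V → Fin r) (v u w : V) (j k ℓ : Fin r) : Prop :=
  j ≠ k ∧ j ≠ ℓ ∧ k ≠ ℓ ∧
    ((χ s(v, u) = j ∧ χ s(v, w) = k) ∨ (χ s(v, u) = k ∧ χ s(v, w) = j)) ∧ χ s(u, w) = ℓ

/-- The triangle `vuw` is of type `b(k,ℓ)`: `ℓ ≠ k`, `χ(vu) = χ(vw) = k` and `χ(uw) = ℓ`. -/
def TriTypeB {V : Type*} {r : ℕ} (χ : Sym2 V → Fin r) (v u w : V) (k ℓ : Fin r) : Prop :=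
  ℓ ≠ k ∧ χ s(v, u) = k ∧ χ s(v, w) = k ∧ χ s(u, w) = ℓ

/-- The triangle `vuw` is of type `c(k)`: either `χ(vu) = χ(vw) = χ(uw) = k`, or there is
`ℓ ≠ k` with `{χ(vu), χ(vw)} = {k,ℓ}` and `χ(uw) = ℓ`. -/
def TriTypeC {V : Type*} {r : ℕ} (χ : Sym2 V → Fin r) (v u w : V) (k : Fin r) : Prop :=
  (χ s(v, u) = k ∧ χ s(v, w) = k ∧ χ s(u, w) = k) ∨
    ∃ ℓ : Fin r, ℓ ≠ k ∧
      ((χ s(v, u) = k ∧ χ s(v, w) = ℓ) ∨ (χ s(v, u) = ℓ ∧ χ s(v, w) = k)) ∧ χ s(u, w) = ℓ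

set_option maxHeartbeats 2000000 in

private lemma bowtie_key {r : ℕ} (a b c d e f : Fin r)
    (H : ∀ k : Fin r,
      ((if a = k then (1:ℤ) else 0) + (if b = k then 1 else 0) + (if f = k then 1 else 0)) =
      (if d = k then 1 else 0) + (if e = k then 1 else 0) + (if c = k then 1 else 0)) :
    (∃ j k ℓ : Fin r,
      (j ≠ k ∧ j ≠ ℓ ∧ k ≠ ℓ ∧ ((a = j ∧ b = k) ∨ (a = k ∧ b = j)) ∧ c = ℓ) ∧
      (j ≠ k ∧ j ≠ ℓ ∧ k ≠ ℓ ∧ ((d = j ∧ e = k) ∨ (d = k ∧ e = j)) ∧ f = ℓ)) ∨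
    (∃ k ℓ : Fin r,
      (ℓ ≠ k ∧ a = k ∧ b = k ∧ c = ℓ) ∧ (ℓ ≠ k ∧ d = k ∧ e = k ∧ f = ℓ)) ∨
    (∃ k : Fin r,
      ((a = k ∧ b = k ∧ c = k) ∨
        ∃ ℓ : Fin r, ℓ ≠ k ∧ ((a = k ∧ b = ℓ) ∨ (a = ℓ ∧ b = k)) ∧ c = ℓ) ∧
      ((d = k ∧ e = k ∧ f = k) ∨
        ∃ ℓ : Fin r, ℓ ≠ k ∧ ((d = k ∧ e = ℓ) ∨ (d = ℓ ∧ e = k)) ∧ f = ℓ)) := by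
  by_cases hab : a = b
  · by_cases hca : c = a
    · -- triangle 1 is monochromatic of color a
      by_cases hfa : f = a
      · have hde : d = a ∧ e = a := by
          have := H a; split_ifs at this <;> first | exact ⟨‹_›, ‹_›⟩ | omega | simp_all
        exact Or.inr (Or.inr ⟨a, Or.inl ⟨rfl, hab.symm, hca⟩, Or.inl ⟨hde.1, hde.2, hfa⟩⟩)
      · have h1 : (d = a ∧ ¬ e = a) ∨ (¬ d = a ∧ e = a) := by
          have := H a; split_ifs at this <;> first | omega | tauto | simp_all
        rcases h1 with ⟨hd, he⟩ | ⟨hd, he⟩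
        · have hef : e = f := by
            have := H f; split_ifs at this <;> first | assumption | omega | simp_all
          exact Or.inr (Or.inr ⟨a, Or.inl ⟨rfl, hab.symm, hca⟩,
            Or.inr ⟨f, hfa, Or.inl ⟨hd, hef⟩, rfl⟩⟩)
        · have hdf : d = f := by
            have := H f; split_ifs at this <;> first | assumption | omega | simp_all
          exact Or.inr (Or.inr ⟨a, Or.inl ⟨rfl, hab.symm, hca⟩,
            Or.inr ⟨f, hfa, Or.inr ⟨hdf, he⟩, rfl⟩⟩)
    · -- type B(a,c)
      have hfc : f = c ∧ ¬ d = c ∧ ¬ e = c := by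
        have := H c; split_ifs at this <;> first | omega | tauto | simp_all
      have hde : d = a ∧ e = a := by
        have hf := hfc.1
        have := H a; split_ifs at this <;> first | exact ⟨‹_›, ‹_›⟩ | omega | simp_all
      exact Or.inr (Or.inl ⟨a, c, ⟨hca, rfl, hab.symm, rfl⟩, ⟨hca, hde.1, hde.2, hfc.1⟩⟩)
  · by_cases hcb : c = b
    · -- triangle 1 is of type C(a) with ℓ = b
      have hba : ¬ b = a := fun h => hab h.symm
      by_cases hfb : f = b
      · have h1 : (d = a ∧ ¬ e = a) ∨ (¬ d = a ∧ e = a) := by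
          have := H a; split_ifs at this <;> first | omega | tauto | simp_all
        have h2 : (d = b ∧ ¬ e = b) ∨ (¬ d = b ∧ e = b) := by
          have := H b; split_ifs at this <;> first | omega | tauto | simp_all
        refine Or.inr (Or.inr ⟨a, Or.inr ⟨b, hba, Or.inl ⟨rfl, rfl⟩, hcb⟩,
          Or.inr ⟨b, hba, ?_, hfb⟩⟩)
        rcases h1 with ⟨hd, he⟩ | ⟨hd, he⟩ <;> rcases h2 with ⟨hd', he'⟩ | ⟨hd', he'⟩ <;>
          first | tauto | simp_all
      · by_cases hfa : f = a
        · have hde : d = a ∧ e = a := by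
            have := H a; split_ifs at this <;> first | exact ⟨‹_›, ‹_›⟩ | omega | simp_all
          exact Or.inr (Or.inr ⟨a, Or.inr ⟨b, hba, Or.inl ⟨rfl, rfl⟩, hcb⟩,
            Or.inl ⟨hde.1, hde.2, hfa⟩⟩)
        · have h1 : (d = a ∧ ¬ e = a) ∨ (¬ d = a ∧ e = a) := by
            have := H a; split_ifs at this <;> first | omega | tauto | simp_all
          have h2 : (d = f ∧ ¬ e = f) ∨ (¬ d = f ∧ e = f) := by
            have := H f; split_ifs at this <;> first | omega | tauto | simp_all
          refine Or.inr (Or.inr ⟨a, Or.inr ⟨b, hba, Or.inl ⟨rfl, rfl⟩, hcb⟩,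
            Or.inr ⟨f, hfa, ?_, rfl⟩⟩)
          rcases h1 with ⟨hd, he⟩ | ⟨hd, he⟩ <;> rcases h2 with ⟨hd', he'⟩ | ⟨hd', he'⟩ <;>
            first | tauto | simp_all
    · by_cases hca : c = a
      · -- triangle 1 is of type C(b) with ℓ = a
        have hanb : ¬ a = b := hab
        by_cases hfa : f = a
        · have h1 : (d = a ∧ ¬ e = a) ∨ (¬ d = a ∧ e = a) := by
            have := H a; split_ifs at this <;> first | omega | tauto | simp_all
          have h2 : (d = b ∧ ¬ e = b) ∨ (¬ d = b ∧ e = b) := by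
            have := H b; split_ifs at this <;> first | omega | tauto | simp_all
          refine Or.inr (Or.inr ⟨b, Or.inr ⟨a, hanb, Or.inr ⟨rfl, rfl⟩, hca⟩,
            Or.inr ⟨a, hanb, ?_, hfa⟩⟩)
          rcases h1 with ⟨hd, he⟩ | ⟨hd, he⟩ <;> rcases h2 with ⟨hd', he'⟩ | ⟨hd', he'⟩ <;>
            first | tauto | simp_all
        · by_cases hfb : f = b
          · have hde : d = b ∧ e = b := by
              have := H b; split_ifs at this <;> first | exact ⟨‹_›, ‹_›⟩ | omega | simp_all
            exact Or.inr (Or.inr ⟨b, Or.inr ⟨a, hanb, Or.inr ⟨rfl, rfl⟩, hca⟩,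
              Or.inl ⟨hde.1, hde.2, hfb⟩⟩)
          · have h1 : (d = b ∧ ¬ e = b) ∨ (¬ d = b ∧ e = b) := by
              have := H b; split_ifs at this <;> first | omega | tauto | simp_all
            have h2 : (d = f ∧ ¬ e = f) ∨ (¬ d = f ∧ e = f) := by
              have := H f; split_ifs at this <;> first | omega | tauto | simp_all
            refine Or.inr (Or.inr ⟨b, Or.inr ⟨a, hanb, Or.inr ⟨rfl, rfl⟩, hca⟩,
              Or.inr ⟨f, hfb, ?_, rfl⟩⟩)
            rcases h1 with ⟨hd, he⟩ | ⟨hd, he⟩ <;> rcases h2 with ⟨hd', he'⟩ | ⟨hd', he'⟩ <;>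
              first | tauto | simp_all
      · -- type A(a,b,c)
        have hfc : f = c ∧ ¬ d = c ∧ ¬ e = c := by
          have := H c; split_ifs at this <;> first | omega | tauto | simp_all
        have h1 : (d = a ∧ ¬ e = a) ∨ (¬ d = a ∧ e = a) := by
          have hf := hfc.1
          have := H a; split_ifs at this <;> first | omega | tauto | simp_all
        have h2 : (d = b ∧ ¬ e = b) ∨ (¬ d = b ∧ e = b) := by
          have hf := hfc.1
          have := H b; split_ifs at this <;> first | omega | tauto | simp_all
        have hac : ¬ a = c := fun h => hca h.symm
        have hbc : ¬ b = c := fun h => hcb h.symm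
        refine Or.inl ⟨a, b, c, ⟨hab, hac, hbc, Or.inl ⟨rfl, rfl⟩, rfl⟩,
          ⟨hab, hac, hbc, ?_, hfc.1⟩⟩
        rcases h1 with ⟨hd, he⟩ | ⟨hd, he⟩ <;> rcases h2 with ⟨hd', he'⟩ | ⟨hd', he'⟩ <;>
          first | tauto | simp_all


/-- If `v u₁ u₂ w₁ w₂` is a bowtie (five distinct vertices, all six edges present) that is
not bad, then the two triangles `vu₁u₂` and `vw₁w₂` have a common type: both of type
`a(j,k,ℓ)` for some parameters, or both of type `b(k,ℓ)`, or both of type `c(k)`. -/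
theorem statement8 {V : Type*} [DecidableEq V] {r : ℕ} (G : SimpleGraph V)
    (χ : Sym2 V → Fin r) (v u₁ u₂ w₁ w₂ : V)
    (hnodup : [v, u₁, u₂, w₁, w₂].Nodup)
    (h1 : G.Adj v u₁) (h2 : G.Adj v u₂) (h3 : G.Adj v w₁) (h4 : G.Adj v w₂)
    (h5 : G.Adj u₁ u₂) (h6 : G.Adj w₁ w₂)
    (hnotbad : ∀ k : Fin r, bowtieF χ v u₁ u₂ w₁ w₂ k = 0) :
    (∃ j k ℓ : Fin r, TriTypeA χ v u₁ u₂ j k ℓ ∧ TriTypeA χ v w₁ w₂ j k ℓ) ∨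
    (∃ k ℓ : Fin r, TriTypeB χ v u₁ u₂ k ℓ ∧ TriTypeB χ v w₁ w₂ k ℓ) ∨
    (∃ k : Fin r, TriTypeC χ v u₁ u₂ k ∧ TriTypeC χ v w₁ w₂ k) := by
  have H : ∀ k : Fin r,
      ((if χ s(v, u₁) = k then (1:ℤ) else 0) + (if χ s(v, u₂) = k then 1 else 0)
        + (if χ s(w₁, w₂) = k then 1 else 0)) =
      (if χ s(v, w₁) = k then 1 else 0) + (if χ s(v, w₂) = k then 1 else 0)
        + (if χ s(u₁, u₂) = k then 1 else 0) := by
    intro k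
    have := hnotbad k
    simp only [bowtieF] at this
    linarith
  simpa only [TriTypeA, TriTypeB, TriTypeC] using
    bowtie_key (χ s(v, u₁)) (χ s(v, u₂)) (χ s(u₁, u₂)) (χ s(v, w₁)) (χ s(v, w₂))
      (χ s(w₁, w₂)) H
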